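/- arXiv:1109.1586 — 2 statements merged into one kernel-verified Lean document; each statement's English description precedes it below -/
import Mathlib

section
/- Let n, k be positive integers with k dividing n, and let e_k denote the k-th standard basis vector of ℂⁿ. Then the Kobayashi metric of the symmetrized polydisc at the origin in direction e_k satisfies κ_{𝔾_n}(0; e_k) = k/n. -/
open Finset Metric

/-- The `k`-th elementary symmetric polynomial of `z ∈ ℂⁿ`. -/
noncomputable def esym (n k : ℕ) (z : Fin n → ℂ) : ℂ :=
  ∑ s ∈ (Finset.univ : Finset (Fin n)).powersetCard k, ∏ j ∈ s, z j

/-- The symmetrization map `σ = (σ₁, …, σₙ) : ℂⁿ → ℂⁿ`. -/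
noncomputable def symMap (n : ℕ) (z : Fin n → ℂ) : Fin n → ℂ :=
  fun k => esym n (k.val + 1) z

/-- The symmetrized polydisc `𝔾ₙ = σ(𝔻ⁿ)`. -/
noncomputable def symPolydisc (n : ℕ) : Set (Fin n → ℂ) :=
  symMap n '' {z | ∀ j, ‖z j‖ < 1}

/-- The Kobayashi metric of a set `D ⊆ ℂᴺ` at `z` in direction `X`:
`κ_D(z; X) = inf{|α| : ∃ φ : 𝔻 → D holomorphic, φ(0) = z, α·φ'(0) = X}`. -/
noncomputable def kobayashi {N : ℕ} (D : Set (Fin N → ℂ)) (z X : Fin N → ℂ) : ℝ :=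
  sInf {r : ℝ | ∃ α : ℂ, r = ‖α‖ ∧
    ∃ φ : ℂ → (Fin N → ℂ), DifferentiableOn ℂ φ (ball 0 1) ∧
      Set.MapsTo φ (ball 0 1) D ∧ φ 0 = z ∧ α • deriv φ 0 = X}

section KobAuxSection
open Polynomial

namespace KobAux


noncomputable def pe (n d : ℕ) (z : Fin n → ℂ) : ℂ := ∑ j, z j ^ d

lemma esym_eq_aeval (n d : ℕ) (z : Fin n → ℂ) :
    esym n d z = MvPolynomial.aeval z (MvPolynomial.esymm (Fin n) ℂ d) := by
  simp [esym, MvPolynomial.esymm, map_sum, map_prod]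

lemma pe_eq_aeval (n d : ℕ) (z : Fin n → ℂ) :
    pe n d z = MvPolynomial.aeval z (MvPolynomial.psum (Fin n) ℂ d) := by
  simp [pe, MvPolynomial.psum, map_sum]

lemma newton (n d : ℕ) (hd : 0 < d) (z : Fin n → ℂ) :
    pe n d z = (-1 : ℂ) ^ (d + 1) * d * esym n d z -
      ∑ a ∈ (antidiagonal d).filter (fun a => a.1 ∈ Set.Ioo 0 d),
        (-1 : ℂ) ^ a.1 * esym n a.1 z * pe n a.2 z := by
  have h := congrArg (MvPolynomial.aeval z)
    (MvPolynomial.psum_eq_mul_esymm_sub_sum (Fin n) ℂ d hd)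
  simp only [map_sub, map_mul, map_sum, map_pow, map_neg, map_one, map_natCast] at h
  rw [pe_eq_aeval, h]
  simp [esym_eq_aeval, pe_eq_aeval]

noncomputable def gfun (u : ℕ → ℂ → ℂ) : ℕ → ℂ → ℂ
  | d => fun lam => (-1 : ℂ) ^ (d + 1) * d * u d lam -
      ∑ a ∈ ((antidiagonal d).filter (fun a => a.1 ∈ Set.Ioo 0 d)).attach,
        have : a.1.2 < d := by
          have h1 := (Finset.mem_filter.mp a.2).1
          have h2 := (Finset.mem_filter.mp a.2).2
          simp only [Finset.HasAntidiagonal.mem_antidiagonal] at h1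
          simp only [Set.mem_Ioo] at h2
          omega
        (-1 : ℂ) ^ a.1.1 * u a.1.1 lam * gfun u a.1.2 lam
  termination_by d => d

lemma gfun_def (u : ℕ → ℂ → ℂ) (d : ℕ) (lam : ℂ) :
    gfun u d lam = (-1 : ℂ) ^ (d + 1) * d * u d lam -
      ∑ a ∈ (antidiagonal d).filter (fun a => a.1 ∈ Set.Ioo 0 d),
        (-1 : ℂ) ^ a.1 * u a.1 lam * gfun u a.2 lam := by
  rw [gfun]
  rw [← Finset.sum_attach ((antidiagonal d).filter (fun a => a.1 ∈ Set.Ioo 0 d))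
    (fun a => (-1 : ℂ) ^ a.1 * u a.1 lam * gfun u a.2 lam)]

lemma mem_aux {d : ℕ} {a : ℕ × ℕ}
    (ha : a ∈ (antidiagonal d).filter (fun a => a.1 ∈ Set.Ioo 0 d)) :
    0 < a.1 ∧ 0 < a.2 ∧ a.2 < d ∧ a.1 + a.2 = d := by
  have h1 := (Finset.mem_filter.mp ha).1
  have h2 := (Finset.mem_filter.mp ha).2
  simp only [Finset.HasAntidiagonal.mem_antidiagonal] at h1
  simp only [Set.mem_Ioo] at h2
  omega

/-- value of gfun equals power sum when u matches elementary symmetrics -/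
lemma gfun_val (n : ℕ) (u : ℕ → ℂ → ℂ) (lam : ℂ) (z : Fin n → ℂ)
    (hu : ∀ i, 0 < i → u i lam = esym n i z) :
    ∀ d, 0 < d → gfun u d lam = pe n d z := by
  intro d
  induction d using Nat.strong_induction_on with
  | _ d ih =>
    intro hd
    rw [gfun_def, newton n d hd z, hu d hd]
    congr 1
    refine Finset.sum_congr rfl fun a ha => ?_
    obtain ⟨h1, h2, h3, h4⟩ := mem_aux ha
    rw [hu a.1 h1, ih a.2 h3 h2]

lemma gfun_diff (u : ℕ → ℂ → ℂ) (hu : ∀ i, DifferentiableOn ℂ (u i) (ball 0 1)) :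
    ∀ d, DifferentiableOn ℂ (gfun u d) (ball 0 1) := by
  intro d
  induction d using Nat.strong_induction_on with
  | _ d ih =>
    have : gfun u d = fun lam => (-1 : ℂ) ^ (d + 1) * d * u d lam -
        ∑ a ∈ (antidiagonal d).filter (fun a => a.1 ∈ Set.Ioo 0 d),
          (-1 : ℂ) ^ a.1 * u a.1 lam * gfun u a.2 lam := funext fun lam => gfun_def u d lam
    rw [this]
    refine DifferentiableOn.sub ((hu d).const_mul _) ?_
    refine DifferentiableOn.fun_sum fun a ha => ?_
    obtain ⟨h1, h2, h3, h4⟩ := mem_aux ha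
    exact ((hu a.1).const_mul _).mul (ih a.2 h3)

lemma gfun_zero (u : ℕ → ℂ → ℂ) (hu : ∀ i, 0 < i → u i 0 = 0) :
    ∀ d, 0 < d → gfun u d 0 = 0 := by
  intro d hd
  rw [gfun_def, hu d hd]
  rw [Finset.sum_eq_zero fun a ha => by rw [hu a.1 (mem_aux ha).1]; ring]
  ring

lemma gfun_deriv (u : ℕ → ℂ → ℂ)
    (hdiff : ∀ i, 0 < i → DifferentiableAt ℂ (u i) 0)
    (hu0 : ∀ i, 0 < i → u i 0 = 0) :
    ∀ d, 0 < d → DifferentiableAt ℂ (gfun u d) 0 ∧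
      deriv (gfun u d) 0 = (-1 : ℂ) ^ (d + 1) * d * deriv (u d) 0 := by
  intro d
  induction d using Nat.strong_induction_on with
  | _ d ih =>
    intro hd
    have heq : gfun u d = fun lam => (-1 : ℂ) ^ (d + 1) * d * u d lam -
        ∑ a ∈ (antidiagonal d).filter (fun a => a.1 ∈ Set.Ioo 0 d),
          (-1 : ℂ) ^ a.1 * u a.1 lam * gfun u a.2 lam := funext fun lam => gfun_def u d lam
    have hterm : ∀ a ∈ (antidiagonal d).filter (fun a => a.1 ∈ Set.Ioo 0 d),
        DifferentiableAt ℂ (fun lam => (-1 : ℂ) ^ a.1 * u a.1 lam * gfun u a.2 lam) 0 ∧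
        deriv (fun lam => (-1 : ℂ) ^ a.1 * u a.1 lam * gfun u a.2 lam) 0 = 0 := by
      intro a ha
      obtain ⟨h1, h2, h3, h4⟩ := mem_aux ha
      have hu1 : DifferentiableAt ℂ (fun lam => (-1 : ℂ) ^ a.1 * u a.1 lam) 0 :=
        (hdiff a.1 h1).const_mul _
      have hg := ih a.2 h3 h2
      refine ⟨hu1.mul hg.1, ?_⟩
      rw [deriv_fun_mul hu1 hg.1]
      simp [hu0 a.1 h1, gfun_zero u hu0 a.2 h2]
    have hsum : DifferentiableAt ℂ (fun lam => ∑ a ∈ (antidiagonal d).filter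
        (fun a => a.1 ∈ Set.Ioo 0 d), (-1 : ℂ) ^ a.1 * u a.1 lam * gfun u a.2 lam) 0 :=
      DifferentiableAt.fun_sum fun a ha => (hterm a ha).1
    have hlead : DifferentiableAt ℂ (fun lam => (-1 : ℂ) ^ (d + 1) * d * u d lam) 0 :=
      (hdiff d hd).const_mul _
    constructor
    · rw [heq]; exact hlead.sub hsum
    · rw [heq, deriv_fun_sub hlead hsum, deriv_fun_sum fun a ha => (hterm a ha).1,
        Finset.sum_eq_zero fun a ha => (hterm a ha).2, deriv_const_mul _ (hdiff d hd)]
      ring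

lemma prod_mod (h : ℕ → Polynomial ℂ) (k m : ℕ) :
    ∏ i ∈ range (k * m), h (i % k) = (∏ a ∈ range k, h a) ^ m := by
  induction m with
  | zero => simp
  | succ m ih =>
    rw [Nat.mul_succ, Finset.prod_range_add, ih, pow_succ]
    congr 1
    refine Finset.prod_congr rfl fun i hi => ?_
    rw [Nat.mul_add_mod, Nat.mod_eq_of_lt (Finset.mem_range.mp hi)]

lemma coeff_pow (k m d n : ℕ) (hk : 0 < k) (hnm : n = k * m) (hd1 : 1 ≤ d) (hdn : d ≤ n)
    (w : ℂ) :
    ((X ^ k - C w) ^ m : ℂ[X]).coeff (n - d) =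
      if k ∣ d then ((m.choose (d / k)) : ℂ) * (-w) ^ (d / k) else 0 := by
  have hexp : ((X ^ k - C w) ^ m : ℂ[X]) =
      ∑ i ∈ range (m + 1), C ((-w) ^ (m - i) * (m.choose i : ℂ)) * X ^ (k * i) := by
    rw [sub_eq_add_neg, ← map_neg C w, add_pow]
    refine Finset.sum_congr rfl fun i _ => ?_
    rw [← map_pow, ← pow_mul]
    rw [mul_comm (k : ℕ) i] at *
    rw [mul_comm ((-w)^(m-i)) ((m.choose i : ℂ))]
    rw [map_mul, C_eq_natCast]
    push_cast
    ring
  rw [hexp, finset_sum_coeff]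
  simp only [coeff_C_mul_X_pow]
  by_cases hdvd : k ∣ d
  · obtain ⟨e, he⟩ := hdvd
    have hem : e ≤ m :=
      Nat.le_of_mul_le_mul_left (le_of_eq_of_le he.symm (hdn.trans_eq hnm)) hk
    have he1 : 1 ≤ e := by
      rcases Nat.eq_zero_or_pos e with h | h
      · subst h; simp at he; omega
      · exact h
    have hdk : d / k = e := by rw [he, Nat.mul_div_cancel_left _ hk]
    have hsub : n - d = k * (m - e) := by rw [hnm, he, ← Nat.mul_sub]
    rw [Finset.sum_eq_single (m - e)]
    · rw [if_pos (by rw [hsub]), if_pos ⟨e, he⟩, hdk]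
      have h2 : m - (m - e) = e := by omega
      rw [h2, Nat.choose_symm hem]
      ring
    · intro i hi hine
      rw [if_neg]
      rw [hsub]
      intro hcon
      exact hine (Nat.eq_of_mul_eq_mul_left hk hcon.symm)
    · intro hnotin
      exact absurd (Finset.mem_range.mpr (by omega)) hnotin
  · rw [if_neg hdvd]
    refine Finset.sum_eq_zero fun i hi => ?_
    rw [if_neg]
    intro hcon
    have him : i ≤ m := by
      have := Finset.mem_range.mp hi
      omega
    have h1 : k * i + d = n := by omega
    have : d = k * (m - i) := by
      rw [Nat.mul_sub, ← hnm]
      omega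
    exact hdvd ⟨m - i, this⟩


lemma symMap_eq (n k m : ℕ) (hk : 0 < k) (hnm : n = k * m)
    (lam μ ζ : ℂ) (hζ : IsPrimitiveRoot ζ k) (hμ : μ ^ k = (-1) ^ (k + 1) * lam) :
    symMap n (fun r : Fin n => ζ ^ (r.val % k) * μ) = fun j : Fin n =>
      if k ∣ (j.val + 1) then ((m.choose ((j.val + 1) / k)) : ℂ) * lam ^ ((j.val + 1) / k)
      else 0 := by
  set w : ℂ := (-1) ^ (k + 1) * lam with hw
  set z : Fin n → ℂ := fun r => ζ ^ (r.val % k) * μ with hz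
  set M : Multiset ℂ := Multiset.map z Finset.univ.val with hM
  have hcard : Multiset.card M = n := by simp [hM]
  have hprod : (M.map fun t => X - C t).prod = ((X ^ k - C w) ^ m : ℂ[X]) := by
    have h1 : (M.map fun t => X - C t).prod = ∏ r : Fin n, (X - C (z r)) := by
      rw [hM, Multiset.map_map]; rfl
    have h2 : ∏ r : Fin n, (X - C (z r)) = ∏ i ∈ range n, (X - C (ζ ^ (i % k) * μ)) :=
      Fin.prod_univ_eq_prod_range (fun i => X - C (ζ ^ (i % k) * μ)) n
    rw [h1, h2, hnm, prod_mod (fun a => X - C (ζ ^ a * μ)) k m,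
      ← X_pow_sub_C_eq_prod hζ hk hμ]
  funext j
  have hd1 : 1 ≤ j.val + 1 := by omega
  have hdn : j.val + 1 ≤ n := j.isLt
  set d := j.val + 1 with hdd
  have hesym : symMap n z j = M.esymm d := by
    rw [hM]
    exact (Finset.esymm_map_val z Finset.univ d).symm
  have hco := Multiset.prod_X_sub_C_coeff M (show n - d ≤ Multiset.card M by omega)
  rw [hprod, hcard] at hco
  have hnd : n - (n - d) = d := by omega
  rw [hnd, coeff_pow k m d n hk hnm hd1 hdn w] at hco
  have hsq : (-1 : ℂ) ^ d * (-1) ^ d = 1 := by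
    rw [← pow_add]; exact Even.neg_one_pow ⟨d, rfl⟩
  have heq : M.esymm d = (-1 : ℂ) ^ d *
      (if k ∣ d then ((m.choose (d / k)) : ℂ) * (-w) ^ (d / k) else 0) := by
    rw [hco, ← mul_assoc, hsq, one_mul]
  show symMap n z j = _
  rw [hesym, heq]
  by_cases hdvd : k ∣ d
  · rw [if_pos hdvd, if_pos hdvd]
    have hnw : (-w) ^ (d / k) = (-1 : ℂ) ^ d * lam ^ (d / k) := by
      have h3 : -w = (-1 : ℂ) ^ k * lam := by rw [hw, pow_succ]; ring
      rw [h3, mul_pow, ← pow_mul, Nat.mul_div_cancel' hdvd]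
    rw [hnw]
    calc (-1 : ℂ) ^ d * (((m.choose (d / k)) : ℂ) * ((-1) ^ d * lam ^ (d / k)))
        = ((-1 : ℂ) ^ d * (-1) ^ d) * (((m.choose (d / k)) : ℂ) * lam ^ (d / k)) := by ring
      _ = ((m.choose (d / k)) : ℂ) * lam ^ (d / k) := by rw [hsq, one_mul]
  · rw [if_neg hdvd, if_neg hdvd, mul_zero]


lemma member (n k m : ℕ) (hk : 0 < k) (hm : 0 < m) (hnm : n = k * m) :
    ∃ α : ℂ, (k : ℝ) / n = ‖α‖ ∧
    ∃ φ : ℂ → (Fin n → ℂ), DifferentiableOn ℂ φ (ball 0 1) ∧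
      Set.MapsTo φ (ball 0 1) (symPolydisc n) ∧ φ 0 = 0 ∧
      α • deriv φ 0 = fun j : Fin n => if (j : ℕ) = k - 1 then 1 else 0 := by
  have hm' : (m : ℂ) ≠ 0 := Nat.cast_ne_zero.mpr hm.ne'
  set φ : ℂ → Fin n → ℂ := fun lam j =>
    if k ∣ (j.val + 1) then ((m.choose ((j.val + 1) / k)) : ℂ) * lam ^ ((j.val + 1) / k)
    else 0 with hφdef
  refine ⟨((m : ℂ))⁻¹, ?_, φ, ?_, ?_, ?_, ?_⟩
  · rw [norm_inv, Complex.norm_natCast, hnm]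
    push_cast
    rw [eq_comm, inv_eq_iff_eq_inv, inv_div]
    rw [mul_comm]
    rw [mul_div_assoc, div_self (by exact_mod_cast hk.ne'), mul_one]
  · -- differentiability
    refine (differentiable_pi.mpr fun j => ?_).differentiableOn
    by_cases hdvd : k ∣ (j.val + 1)
    · have : (fun lam => φ lam j) =
          fun lam => ((m.choose ((j.val + 1) / k)) : ℂ) * lam ^ ((j.val + 1) / k) := by
        funext lam; simp [hφdef, hdvd]
      rw [this]
      exact (differentiable_pow _).const_mul _
    · have : (fun lam => φ lam j) = fun _ => (0 : ℂ) := by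
        funext lam; simp [hφdef, hdvd]
      rw [this]
      exact differentiable_const 0
  · -- maps to
    intro lam hlam
    have hlam1 : ‖lam‖ < 1 := mem_ball_zero_iff.mp hlam
    obtain ⟨μ, hμ⟩ := IsAlgClosed.exists_pow_nat_eq ((-1 : ℂ) ^ (k + 1) * lam) hk
    have hζp := Complex.isPrimitiveRoot_exp k hk.ne'
    have hζ1 : ‖Complex.exp (2 * Real.pi * Complex.I / k)‖ = 1 := hζp.norm'_eq_one hk.ne'
    have hμ1 : ‖μ‖ < 1 := by
      have h1 : ‖μ‖ ^ k = ‖lam‖ := by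
        rw [← norm_pow, hμ, norm_mul, norm_pow, norm_neg, norm_one, one_pow, one_mul]
      by_contra hc
      push_neg at hc
      have h2 : (1 : ℝ) ≤ ‖μ‖ ^ k := one_le_pow₀ hc
      linarith
    refine ⟨fun r : Fin n => Complex.exp (2 * Real.pi * Complex.I / k) ^ (r.val % k) * μ,
      fun r => ?_, ?_⟩
    · show ‖_‖ < 1
      rw [norm_mul, norm_pow, hζ1, one_pow, one_mul]
      exact hμ1
    · exact symMap_eq n k m hk hnm lam μ _ hζp hμ
  · -- φ 0 = 0
    funext j
    show (if k ∣ (j.val + 1) then ((m.choose ((j.val + 1) / k)) : ℂ) *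
      (0 : ℂ) ^ ((j.val + 1) / k) else 0) = 0
    by_cases hdvd : k ∣ (j.val + 1)
    · rw [if_pos hdvd, zero_pow, mul_zero]
      exact (Nat.div_pos (Nat.le_of_dvd (by omega) hdvd) hk).ne'
    · rw [if_neg hdvd]
  · -- derivative condition
    have hD : HasDerivAt φ (fun j : Fin n => if (j : ℕ) = k - 1 then (m : ℂ) else 0) 0 := by
      refine hasDerivAt_pi.mpr fun j => ?_
      by_cases hdvd : k ∣ (j.val + 1)
      · have hcomp : (fun lam => φ lam j) =
            fun lam => ((m.choose ((j.val + 1) / k)) : ℂ) * lam ^ ((j.val + 1) / k) := by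
          funext lam; simp [hφdef, hdvd]
        rw [hcomp]
        have hpow := (hasDerivAt_pow ((j.val + 1) / k) (0 : ℂ)).const_mul
          ((m.choose ((j.val + 1) / k)) : ℂ)
        refine hpow.congr_deriv ?_
        by_cases hj : (j : ℕ) = k - 1
        · have hdk : j.val + 1 = k := by omega
          rw [if_pos hj, hdk, Nat.div_self hk]
          simp
        · rw [if_neg hj]
          have hdne : j.val + 1 ≠ k := by omega
          have he2 : 2 ≤ (j.val + 1) / k := by
            obtain ⟨e, he⟩ := hdvd
            rw [he, Nat.mul_div_cancel_left _ hk]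
            rcases e with _ | _ | e
            · omega
            · exfalso; apply hdne; omega
            · omega
          rw [zero_pow (by omega : (j.val + 1) / k - 1 ≠ 0), mul_zero, mul_zero]
      · have hcomp : (fun lam => φ lam j) = fun _ => (0 : ℂ) := by
          funext lam; simp [hφdef, hdvd]
        rw [hcomp]
        have hj : ¬((j : ℕ) = k - 1) := by
          intro hj
          apply hdvd
          have : j.val + 1 = k := by omega
          rw [this]
        rw [if_neg hj]
        exact hasDerivAt_const 0 0
    rw [hD.deriv]
    funext j
    show ((m : ℂ))⁻¹ * (if (j : ℕ) = k - 1 then (m : ℂ) else 0) = _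
    by_cases hj : (j : ℕ) = k - 1
    · rw [if_pos hj, if_pos hj, inv_mul_cancel₀ hm']
    · rw [if_neg hj, if_neg hj, mul_zero]

lemma esym_eq_zero_of_gt {n i : ℕ} (h : n < i) (z : Fin n → ℂ) : esym n i z = 0 := by
  rw [esym, Finset.powersetCard_eq_empty.mpr (by simpa using h), Finset.sum_empty]

lemma lower (n k : ℕ) (hk : 0 < k) (hn : 0 < n) (hkn : k ≤ n)
    (α : ℂ) (φ : ℂ → Fin n → ℂ) (hφd : DifferentiableOn ℂ φ (ball 0 1))
    (hmaps : Set.MapsTo φ (ball 0 1) (symPolydisc n)) (hφ0 : φ 0 = 0)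
    (hX : α • deriv φ 0 = fun j : Fin n => if (j : ℕ) = k - 1 then 1 else 0) :
    (k : ℝ) / n ≤ ‖α‖ := by
  have h0m : (0 : ℂ) ∈ ball (0 : ℂ) 1 := mem_ball_self one_pos
  have hφAt : DifferentiableAt ℂ φ 0 := hφd.differentiableAt (isOpen_ball.mem_nhds h0m)
  -- the auxiliary component functions
  set u : ℕ → ℂ → ℂ := fun i lam => if h : 0 < i ∧ i ≤ n then φ lam ⟨i - 1, by omega⟩ else 0
    with hu_def
  have hcompd : ∀ j : Fin n, DifferentiableOn ℂ (fun lam => φ lam j) (ball 0 1) := fun j =>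
    (ContinuousLinearMap.proj (R := ℂ) (φ := fun _ : Fin n => ℂ)
      j).differentiable.comp_differentiableOn hφd
  have hud : ∀ i, DifferentiableOn ℂ (u i) (ball 0 1) := by
    intro i
    by_cases h : 0 < i ∧ i ≤ n
    · simpa [hu_def, h] using hcompd ⟨i - 1, by omega⟩
    · simp [hu_def, h, differentiableOn_const]
  have hu0 : ∀ i, 0 < i → u i 0 = 0 := by
    intro i hi
    by_cases h : 0 < i ∧ i ≤ n
    · simp only [hu_def, dif_pos h, hφ0]; rfl
    · simp [hu_def, h]
  have huAt : ∀ i, 0 < i → DifferentiableAt ℂ (u i) 0 := fun i _ =>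
    (hud i).differentiableAt (isOpen_ball.mem_nhds h0m)
  -- F = gfun u k maps the disc to ball 0 n
  have hF0 : gfun u k 0 = 0 := gfun_zero u hu0 k hk
  have hFd := gfun_diff u hud k
  have hFmaps : Set.MapsTo (gfun u k) (ball 0 1) (ball (gfun u k 0) n) := by
    intro lam hlam
    obtain ⟨z, hz, hφz⟩ := hmaps hlam
    have hu : ∀ i, 0 < i → u i lam = esym n i z := by
      intro i hi
      by_cases h : 0 < i ∧ i ≤ n
      · have : u i lam = φ lam ⟨i - 1, by omega⟩ := by simp [hu_def, h]
        rw [this, ← hφz]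
        show esym n ((i - 1) + 1) z = esym n i z
        congr 1; omega
      · have : u i lam = 0 := by simp [hu_def, h]
        rw [this, esym_eq_zero_of_gt (by omega) z]
    rw [gfun_val n u lam z hu k hk, hF0, mem_ball_zero_iff]
    calc ‖pe n k z‖ ≤ ∑ j, ‖z j ^ k‖ := norm_sum_le _ _
      _ < ∑ _j : Fin n, (1 : ℝ) := by
          refine Finset.sum_lt_sum_of_nonempty (by simp [Fin.pos_iff_nonempty.mp hn]) ?_
          intro j _
          rw [norm_pow]
          exact pow_lt_one₀ (norm_nonneg _) (hz j) hk.ne'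
      _ = n := by simp
  -- Schwarz
  have hSch : ‖deriv (gfun u k) 0‖ ≤ (n : ℝ) / 1 :=
    Complex.norm_deriv_le_div_of_mapsTo_ball hFd (hFmaps.mono_right ball_subset_closedBall) one_pos
  -- compute the derivative
  have hkidx : k - 1 < n := by omega
  have hcomp : deriv (u k) 0 = deriv φ 0 ⟨k - 1, hkidx⟩ := by
    have : u k = fun lam => φ lam ⟨k - 1, hkidx⟩ := by
      funext lam; simp [hu_def, hk, hkn]
    rw [this]
    exact (hasDerivAt_pi.mp hφAt.hasDerivAt ⟨k - 1, hkidx⟩).deriv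
  have hderF : deriv (gfun u k) 0 = (-1 : ℂ) ^ (k + 1) * k * deriv φ 0 ⟨k - 1, hkidx⟩ := by
    rw [(gfun_deriv u huAt hu0 k hk).2, hcomp]
  have hXk : α * deriv φ 0 ⟨k - 1, hkidx⟩ = 1 := by
    have := congrFun hX ⟨k - 1, hkidx⟩
    simpa using this
  have hα : α ≠ 0 := by
    intro h; rw [h, zero_mul] at hXk; exact one_ne_zero hXk.symm
  have hder : deriv φ 0 ⟨k - 1, hkidx⟩ = α⁻¹ := by
    field_simp at hXk ⊢
    linear_combination hXk
  rw [hderF, hder] at hSch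
  have hnorm : ‖(-1 : ℂ) ^ (k + 1) * k * α⁻¹‖ = k * ‖α‖⁻¹ := by
    simp [norm_mul, norm_pow, norm_inv]
  rw [hnorm] at hSch
  have hαpos : 0 < ‖α‖ := norm_pos_iff.mpr hα
  rw [div_le_iff₀ (by positivity)]
  rw [div_one] at hSch
  calc (k : ℝ) = (k * ‖α‖⁻¹) * ‖α‖ := by rw [mul_assoc, inv_mul_cancel₀ hαpos.ne', mul_one]
    _ ≤ n * ‖α‖ := mul_le_mul_of_nonneg_right hSch hαpos.le
    _ = ‖α‖ * n := mul_comm _ _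


end KobAux

end KobAuxSection

/-- if `k ∣ n` (with `k, n ≥ 1`) then the Kobayashi metric of `𝔾ₙ`
at the origin in the direction of the `k`-th standard basis vector is `k/n`. -/
theorem kobayashi_symPolydisc_basis_dvd (n k : ℕ) (hk : 0 < k) (hn : 0 < n)
    (hdvd : k ∣ n) :
    kobayashi (symPolydisc n) 0
      (fun j : Fin n => if (j : ℕ) = k - 1 then 1 else 0) = (k : ℝ) / n := by
  have hkn : k ≤ n := Nat.le_of_dvd hn hdvd
  obtain ⟨m, hm⟩ := hdvd
  have hm0 : 0 < m := by
    rcases Nat.eq_zero_or_pos m with h | h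
    · subst h; simp at hm; omega
    · exact h
  obtain ⟨α, hα, φ, h1, h2, h3, h4⟩ := KobAux.member n k m hk hm0 hm
  have hmem : (k : ℝ) / n ∈ {r : ℝ | ∃ α : ℂ, r = ‖α‖ ∧
      ∃ φ : ℂ → (Fin n → ℂ), DifferentiableOn ℂ φ (ball 0 1) ∧
        Set.MapsTo φ (ball 0 1) (symPolydisc n) ∧ φ 0 = 0 ∧
        α • deriv φ 0 = fun j : Fin n => if (j : ℕ) = k - 1 then 1 else 0} :=
    ⟨α, hα, φ, h1, h2, h3, h4⟩
  have hlb : ∀ r ∈ {r : ℝ | ∃ α : ℂ, r = ‖α‖ ∧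
      ∃ φ : ℂ → (Fin n → ℂ), DifferentiableOn ℂ φ (ball 0 1) ∧
        Set.MapsTo φ (ball 0 1) (symPolydisc n) ∧ φ 0 = 0 ∧
        α • deriv φ 0 = fun j : Fin n => if (j : ℕ) = k - 1 then 1 else 0},
      (k : ℝ) / n ≤ r := by
    rintro r ⟨β, rfl, ψ, hψ1, hψ2, hψ3, hψ4⟩
    exact KobAux.lower n k hk hn hkn β ψ hψ1 hψ2 hψ3 hψ4
  rw [kobayashi]
  exact le_antisymm (csInf_le ⟨(k : ℝ) / n, hlb⟩ hmem) (le_csInf ⟨_, hmem⟩ hlb)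
end

section
/- Let n, k be positive integers with k ≤ n such that k does not divide n, and let e_k denote the k-th standard basis vector of ℂⁿ. Then the Carathéodory metric of the symmetrized polydisc satisfies the strict inequality γ_{𝔾_n}(0; e_k) > k/n. -/
set_option maxHeartbeats 1000000

open Finset Metric Polynomial

/-- The Carathéodory metric of a set `D ⊆ ℂᴺ` at `z` in direction `X`:
`γ_D(z; X) = sup{|df_z(X)| : f : D → 𝔻 holomorphic, f(z) = 0}`. -/
noncomputable def caratheodory {N : ℕ} (D : Set (Fin N → ℂ)) (z X : Fin N → ℂ) : ℝ :=
  sSup {r : ℝ | ∃ f : (Fin N → ℂ) → ℂ, DifferentiableOn ℂ f D ∧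
    (∀ w ∈ D, ‖f w‖ < 1) ∧ f z = 0 ∧ r = ‖fderiv ℂ f z X‖}

namespace CaraSymAux



/-- `sIdx n d s = s_{d}` (1-based indexing), junk `0` out of range. -/
noncomputable def sIdx (n d : ℕ) (s : Fin n → ℂ) : ℂ :=
  if h : d - 1 < n then s ⟨d - 1, h⟩ else 0

/-- Newton polynomial expressing the `m`-th power sum in the elementary symmetric values. -/
noncomputable def NP (n : ℕ) : ℕ → (Fin n → ℂ) → ℂ := fun m s =>
  if m = 0 then (n : ℂ)
  else (-1 : ℂ) ^ (m + 1) * m * sIdx n m s -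
    ∑ a ∈ (Finset.filter (fun a => a.1 ∈ Set.Ioo 0 m) (antidiagonal m)).attach,
      (-1 : ℂ) ^ (a.1.1 : ℕ) * sIdx n a.1.1 s * NP n a.1.2 s
  termination_by m _ => m
  decreasing_by
    have := a.2
    simp only [Finset.mem_filter, Finset.HasAntidiagonal.mem_antidiagonal, Set.mem_Ioo] at this
    omega

/-- The `m`-th power sum. -/
noncomputable def psumC (n m : ℕ) (z : Fin n → ℂ) : ℂ := ∑ j, z j ^ m

theorem eval_esymm (n m : ℕ) (z : Fin n → ℂ) :
    MvPolynomial.eval z (MvPolynomial.esymm (Fin n) ℂ m) = esym n m z := by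
  simp [MvPolynomial.esymm, esym]

theorem eval_psum (n m : ℕ) (z : Fin n → ℂ) :
    MvPolynomial.eval z (MvPolynomial.psum (Fin n) ℂ m) = psumC n m z := by
  simp [MvPolynomial.psum, psumC]

/-- Newton's identity, numerically. -/
theorem newton_num (n m : ℕ) (hm : 0 < m) (z : Fin n → ℂ) :
    psumC n m z = (-1 : ℂ) ^ (m + 1) * m * esym n m z -
      ∑ a ∈ Finset.filter (fun a => a.1 ∈ Set.Ioo 0 m) (antidiagonal m),
        (-1 : ℂ) ^ (a.1 : ℕ) * esym n a.1 z * psumC n a.2 z := by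
  have h := congrArg (MvPolynomial.eval z)
    (MvPolynomial.psum_eq_mul_esymm_sub_sum (Fin n) ℂ m hm)
  simpa [eval_esymm, eval_psum, map_sub, map_mul, map_sum, map_pow] using h

theorem sIdx_symMap (n d : ℕ) (hd : 0 < d) (hdn : d ≤ n) (z : Fin n → ℂ) :
    sIdx n d (symMap n z) = esym n d z := by
  have h : d - 1 < n := by omega
  rw [sIdx, dif_pos h]
  show esym n (d - 1 + 1) z = esym n d z
  congr 1
  omega

theorem NP_symMap (n : ℕ) (z : Fin n → ℂ) :
    ∀ m, 0 < m → m ≤ n → NP n m (symMap n z) = psumC n m z := by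
  intro m
  induction m using Nat.strong_induction_on with
  | _ m ih =>
    intro hm hmn
    rw [NP, if_neg (by omega), Finset.sum_attach
      (Finset.filter (fun a => a.1 ∈ Set.Ioo 0 m) (antidiagonal m))
      (fun p : ℕ × ℕ => (-1 : ℂ) ^ (p.1 : ℕ) * sIdx n p.1 (symMap n z) * NP n p.2 (symMap n z)),
      newton_num n m hm z]
    congr 1
    · rw [sIdx_symMap n m hm hmn]
    · apply Finset.sum_congr rfl
      intro a ha
      simp only [Finset.mem_filter, Finset.HasAntidiagonal.mem_antidiagonal, Set.mem_Ioo] at ha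
      rw [sIdx_symMap n a.1 ha.2.1 (by omega), ih a.2 (by omega) (by omega) (by omega)]

noncomputable def projCLM (n : ℕ) (i : Fin n) : (Fin n → ℂ) →L[ℂ] ℂ :=
  ContinuousLinearMap.proj i

theorem sIdx_eq_proj (n d : ℕ) (hdn : d - 1 < n) :
    sIdx n d = fun s => s ⟨d - 1, hdn⟩ := by
  funext s; rw [sIdx, dif_pos]

theorem sIdx_diff (n d : ℕ) : Differentiable ℂ (sIdx n d) := by
  rcases Nat.lt_or_ge (d - 1) n with h | h
  · rw [sIdx_eq_proj n d h]
    exact (projCLM n ⟨d - 1, h⟩).differentiable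
  · have : sIdx n d = fun _ => (0 : ℂ) := by
      funext s; rw [sIdx, dif_neg (by omega)]
    rw [this]; exact differentiable_const 0

theorem NP_diff (n : ℕ) : ∀ m, Differentiable ℂ (NP n m) := by
  intro m
  induction m using Nat.strong_induction_on with
  | _ m ih =>
    rcases Nat.eq_zero_or_pos m with hm | hm
    · subst hm
      have : NP n 0 = fun _ => (n : ℂ) := by funext s; rw [NP]; simp
      rw [this]; exact differentiable_const _
    · have : NP n m = fun s => (-1 : ℂ) ^ (m + 1) * m * sIdx n m s -
        ∑ a ∈ (Finset.filter (fun a => a.1 ∈ Set.Ioo 0 m) (antidiagonal m)).attach,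
          (-1 : ℂ) ^ (a.1.1 : ℕ) * sIdx n a.1.1 s * NP n a.1.2 s := by
        funext s; rw [NP, if_neg (by omega)]
      rw [this]
      apply Differentiable.sub
      · exact (differentiable_const _).mul (sIdx_diff n m)
      · apply Differentiable.fun_sum
        intro t _
        have hlt : t.1.2 < m := by
          have := t.2
          simp only [Finset.mem_filter, Finset.HasAntidiagonal.mem_antidiagonal, Set.mem_Ioo] at this
          omega
        exact (((differentiable_const _).mul (sIdx_diff n t.1.1)).mul (ih t.1.2 hlt))

theorem sIdx_zero (n d : ℕ) : sIdx n d 0 = 0 := by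
  unfold sIdx; split <;> simp

theorem NP_zero (n : ℕ) (m : ℕ) (hm : 0 < m) : NP n m 0 = 0 := by
  rw [NP, if_neg (by omega)]
  simp [sIdx_zero]

theorem NP_hasFDerivAt (n : ℕ) (m : ℕ) (hm : 0 < m) (hmn : m ≤ n) :
    HasFDerivAt (NP n m)
      (((-1 : ℂ) ^ (m + 1) * m) • projCLM n ⟨m - 1, by omega⟩) 0 := by
  have hfun : NP n m = fun s => (-1 : ℂ) ^ (m + 1) * m * sIdx n m s -
      ∑ a ∈ (Finset.filter (fun a => a.1 ∈ Set.Ioo 0 m) (antidiagonal m)).attach,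
        (-1 : ℂ) ^ (a.1.1 : ℕ) * sIdx n a.1.1 s * NP n a.1.2 s := by
    funext s; rw [NP, if_neg (by omega)]
  rw [hfun]
  have h1 : HasFDerivAt (fun s : Fin n → ℂ => (-1 : ℂ) ^ (m + 1) * m * sIdx n m s)
      (((-1 : ℂ) ^ (m + 1) * m) • projCLM n ⟨m - 1, by omega⟩) 0 := by
    rw [sIdx_eq_proj n m (by omega)]
    exact ((projCLM n ⟨m - 1, by omega⟩).hasFDerivAt).const_mul _
  have h2 : HasFDerivAt (fun s : Fin n → ℂ =>
      ∑ a ∈ (Finset.filter (fun a => a.1 ∈ Set.Ioo 0 m) (antidiagonal m)).attach,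
        (-1 : ℂ) ^ (a.1.1 : ℕ) * sIdx n a.1.1 s * NP n a.1.2 s)
      (0 : (Fin n → ℂ) →L[ℂ] ℂ) 0 := by
    have hz : (0 : (Fin n → ℂ) →L[ℂ] ℂ) =
        ∑ _a ∈ (Finset.filter (fun a => a.1 ∈ Set.Ioo 0 m) (antidiagonal m)).attach,
          (0 : (Fin n → ℂ) →L[ℂ] ℂ) := by simp
    rw [hz]
    apply HasFDerivAt.fun_sum
    intro t _
    have hmem := t.2
    simp only [Finset.mem_filter, Finset.HasAntidiagonal.mem_antidiagonal, Set.mem_Ioo] at hmem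
    have hu : HasFDerivAt (fun s : Fin n → ℂ => (-1 : ℂ) ^ (t.1.1 : ℕ) * sIdx n t.1.1 s)
        (((-1 : ℂ) ^ (t.1.1 : ℕ)) • projCLM n ⟨t.1.1 - 1, by omega⟩) 0 := by
      rw [sIdx_eq_proj n t.1.1 (by omega)]
      exact ((projCLM n ⟨t.1.1 - 1, by omega⟩).hasFDerivAt).const_mul _
    have hv : HasFDerivAt (NP n t.1.2) (fderiv ℂ (NP n t.1.2) 0) 0 :=
      (NP_diff n t.1.2 0).hasFDerivAt
    have hprod := hu.fun_mul hv
    have hz1 : (fun s : Fin n → ℂ => (-1 : ℂ) ^ (t.1.1 : ℕ) * sIdx n t.1.1 s) 0 = 0 := by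
      simp [sIdx_zero]
    have hz2 : NP n t.1.2 0 = 0 := NP_zero n t.1.2 (by omega)
    simp only [sIdx_zero, hz2, mul_zero, zero_smul, smul_zero, zero_add, add_zero] at hprod
    refine hprod.congr_fderiv ?_; ext; simp
  have h3 := h1.fun_sub h2
  simpa using h3
noncomputable def QzF (n k : ℕ) (z : Fin n → ℂ) : ℂ :=
  ∑ d ∈ Finset.Ioo 0 k, psumC n d z * psumC n (k - d) z
noncomputable def psi (n k : ℕ) (z : Fin n → ℂ) : ℝ :=
  (psumC n k z * (starRingEnd ℂ) (QzF n k z)).re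

theorem psumC_cont (n m : ℕ) : Continuous (psumC n m) := by
  unfold psumC; fun_prop

theorem QzF_cont (n k : ℕ) : Continuous (QzF n k) := by
  unfold QzF psumC; fun_prop

theorem psi_cont (n k : ℕ) : Continuous (psi n k) := by
  apply Complex.continuous_re.comp
  exact (psumC_cont n k).mul (Complex.continuous_conj.comp (QzF_cont n k))

theorem psumC_bound (n m : ℕ) (z : Fin n → ℂ) (hT : ∀ j, ‖z j‖ ≤ 1) :
    ‖psumC n m z‖ ≤ n := by
  calc ‖psumC n m z‖ ≤ ∑ j : Fin n, ‖z j ^ m‖ := norm_sum_le _ _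
    _ ≤ ∑ _j : Fin n, (1 : ℝ) := by
        apply Finset.sum_le_sum
        intro j _
        rw [norm_pow]
        exact pow_le_one₀ (norm_nonneg _) (hT j)
    _ = n := by simp

theorem QzF_bound (n k : ℕ) (z : Fin n → ℂ) (hT : ∀ j, ‖z j‖ ≤ 1) :
    ‖QzF n k z‖ ≤ k * n ^ 2 := by
  calc ‖QzF n k z‖ ≤ ∑ d ∈ Finset.Ioo 0 k, ‖psumC n d z * psumC n (k - d) z‖ :=
        norm_sum_le _ _
    _ ≤ ∑ _d ∈ Finset.Ioo 0 k, (n * n : ℝ) := by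
        apply Finset.sum_le_sum
        intro d _
        rw [norm_mul]
        exact mul_le_mul (psumC_bound n d z hT) (psumC_bound n (k - d) z hT)
          (norm_nonneg _) (Nat.cast_nonneg n)
    _ = (Finset.Ioo 0 k).card * (n * n) := by rw [Finset.sum_const, nsmul_eq_mul]
    _ ≤ k * n ^ 2 := by
        rw [Nat.card_Ioo, Nat.sub_zero]
        have : ((k - 1 : ℕ) : ℝ) ≤ (k : ℝ) := Nat.cast_le.mpr (Nat.sub_le k 1)
        nlinarith [sq_nonneg (n : ℝ), (Nat.cast_nonneg n : (0:ℝ) ≤ (n:ℝ))]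

/-- Key algebraic lemma: at a maximum point of `|p_k|` on the closed polydisc,
`ψ > 0`, using `¬ k ∣ n`. -/
theorem psi_pos_of_max (n k : ℕ) (hk : 0 < k) (hkn : k ≤ n) (hndvd : ¬ k ∣ n)
    (z : Fin n → ℂ) (hT : ∀ j, ‖z j‖ ≤ 1) (hmax : ‖psumC n k z‖ = n) :
    0 < psi n k z := by
  have hn : 0 < n := lt_of_lt_of_le hk hkn
  have hnC : ((n : ℂ)) ≠ 0 := by exact_mod_cast Nat.cast_ne_zero.mpr hn.ne'
  set μ : ℂ := psumC n k z / n with hμdef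
  have hpk : psumC n k z = n * μ := by rw [hμdef]; field_simp
  have hμ1 : ‖μ‖ = 1 := by
    rw [hμdef, norm_div]
    rw [hmax]
    simp [hn.ne']
  have hμsq : Complex.normSq μ = 1 := by
    rw [Complex.normSq_eq_norm_sq, hμ1]; norm_num
  have hμconj : (starRingEnd ℂ) μ * μ = 1 := by
    rw [mul_comm, Complex.mul_conj, hμsq, Complex.ofReal_one]
  -- each z j ^ k equals μ
  have hw : ∀ j, z j ^ k = μ := by
    have hsum : ∑ j, (starRingEnd ℂ) μ * z j ^ k = (n : ℂ) := by
      rw [← Finset.mul_sum]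
      show (starRingEnd ℂ) μ * psumC n k z = n
      rw [hpk]
      have h9 : (starRingEnd ℂ) μ * ((n : ℂ) * μ) = (n : ℂ) * ((starRingEnd ℂ) μ * μ) := by
        ring
      rw [h9, hμconj, mul_one]
    have hre : ∑ j, (1 - ((starRingEnd ℂ) μ * z j ^ k).re) = 0 := by
      rw [Finset.sum_sub_distrib]
      have : (∑ j, ((starRingEnd ℂ) μ * z j ^ k).re) = ((n : ℂ)).re := by
        rw [← Complex.re_sum]
        exact congrArg Complex.re hsum
      rw [this]
      simp
    have hle : ∀ j, ((starRingEnd ℂ) μ * z j ^ k).re ≤ 1 := by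
      intro j
      calc ((starRingEnd ℂ) μ * z j ^ k).re ≤ ‖(starRingEnd ℂ) μ * z j ^ k‖ :=
            Complex.re_le_norm _
        _ = ‖μ‖ * ‖z j ^ k‖ := by
            rw [norm_mul, Complex.norm_conj]
        _ ≤ 1 := by
            rw [hμ1, one_mul, norm_pow]
            exact pow_le_one₀ (norm_nonneg _) (hT j)
    have heq1 : ∀ j ∈ Finset.univ, (1 - ((starRingEnd ℂ) μ * z j ^ k).re) = 0 := by
      rw [← Finset.sum_eq_zero_iff_of_nonneg]
      · exact hre
      · intro j _
        linarith [hle j]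
    intro j
    have hre1 : ((starRingEnd ℂ) μ * z j ^ k).re = 1 := by
      have := heq1 j (Finset.mem_univ j)
      linarith
    have habs : Complex.normSq ((starRingEnd ℂ) μ * z j ^ k) ≤ 1 := by
      have h1 : ‖(starRingEnd ℂ) μ * z j ^ k‖ ≤ 1 := by
        rw [norm_mul, Complex.norm_conj, hμ1, one_mul, norm_pow]
        exact pow_le_one₀ (norm_nonneg _) (hT j)
      rw [Complex.normSq_eq_norm_sq]
      nlinarith [norm_nonneg ((starRingEnd ℂ) μ * z j ^ k)]
    have him : ((starRingEnd ℂ) μ * z j ^ k).im = 0 := by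
      rw [Complex.normSq_apply, hre1] at habs
      nlinarith [sq_nonneg ((starRingEnd ℂ) μ * z j ^ k).im]
    have hu1 : (starRingEnd ℂ) μ * z j ^ k = 1 := by
      apply Complex.ext <;> simp [hre1, him]
    calc z j ^ k = (μ * (starRingEnd ℂ) μ) * z j ^ k := by
          rw [mul_comm μ _, hμconj, one_mul]
      _ = μ * ((starRingEnd ℂ) μ * z j ^ k) := by ring
      _ = μ := by rw [hu1, mul_one]
  -- all |z j| = 1
  have habs1 : ∀ j, ‖z j‖ = 1 := by
    intro j
    by_contra hne
    have hlt : ‖z j‖ < 1 := lt_of_le_of_ne (hT j) hne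
    have : ‖z j‖ ^ k < 1 := pow_lt_one₀ (norm_nonneg _) hlt hk.ne'
    rw [← norm_pow, hw j, hμ1] at this
    exact absurd this (lt_irrefl 1)
  -- conjugation relation
  have hconj : ∀ (j : Fin n) (d : ℕ), d ≤ k →
      (starRingEnd ℂ) (z j ^ d) * μ = z j ^ (k - d) := by
    intro j d hd
    have hzsq : Complex.normSq (z j) = 1 := by
      rw [Complex.normSq_eq_norm_sq, habs1 j]; norm_num
    have hzc : (starRingEnd ℂ) (z j) * z j = 1 := by
      rw [mul_comm, Complex.mul_conj, hzsq, Complex.ofReal_one]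
    have hzd : (starRingEnd ℂ) (z j ^ d) * z j ^ d = 1 := by
      rw [map_pow, ← mul_pow, hzc, one_pow]
    calc (starRingEnd ℂ) (z j ^ d) * μ
        = (starRingEnd ℂ) (z j ^ d) * (z j ^ d * z j ^ (k - d)) := by
          rw [← pow_add, Nat.add_sub_cancel' hd, hw j]
      _ = ((starRingEnd ℂ) (z j ^ d) * z j ^ d) * z j ^ (k - d) := by ring
      _ = z j ^ (k - d) := by rw [hzd, one_mul]
  -- p_{k-d} = conj(p_d) * μ
  have hpkd : ∀ d, d ≤ k → psumC n (k - d) z = (starRingEnd ℂ) (psumC n d z) * μ := by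
    intro d hd
    unfold psumC
    rw [map_sum, Finset.sum_mul]
    apply Finset.sum_congr rfl
    intro j _
    exact (hconj j d hd).symm
  -- Q = μ * Σ normSq
  set S : ℝ := ∑ d ∈ Finset.Ioo 0 k, Complex.normSq (psumC n d z) with hSdef
  have hQ : QzF n k z = μ * (S : ℂ) := by
    unfold QzF
    rw [hSdef]
    push_cast
    rw [Finset.mul_sum]
    apply Finset.sum_congr rfl
    intro d hd
    rw [Finset.mem_Ioo] at hd
    rw [hpkd d (le_of_lt hd.2)]
    have h9 : psumC n d z * ((starRingEnd ℂ) (psumC n d z) * μ)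
        = (psumC n d z * (starRingEnd ℂ) (psumC n d z)) * μ := by ring
    rw [h9, Complex.mul_conj]
    ring
  -- psi = n * S
  have hpsi : psi n k z = n * S := by
    unfold psi
    rw [hpk, hQ, map_mul]
    have hSconj : (starRingEnd ℂ) ((S : ℝ) : ℂ) = ((S : ℝ) : ℂ) := Complex.conj_ofReal S
    rw [hSconj]
    have : (n : ℂ) * μ * ((starRingEnd ℂ) μ * (S : ℂ))
        = (n : ℂ) * (S : ℂ) * (μ * (starRingEnd ℂ) μ) := by ring
    rw [this, mul_comm μ _, hμconj, mul_one]
    have : ((n : ℂ) * (S : ℂ)) = (((n * S : ℝ)) : ℂ) := by push_cast; ring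
    rw [this, Complex.ofReal_re]
  -- positivity of S
  have hSpos : 0 < S := by
    rcases lt_or_eq_of_le (Finset.sum_nonneg (fun d _ => Complex.normSq_nonneg _)) with h | h
    · exact h
    · exfalso
      have hzero : ∀ d ∈ Finset.Ioo 0 k, psumC n d z = 0 := by
        intro d hd
        have := (Finset.sum_eq_zero_iff_of_nonneg
          (fun d _ => Complex.normSq_nonneg (psumC n d z))).mp h.symm d hd
        exact Complex.normSq_eq_zero.mp this
      -- DFT / roots of unity counting
      obtain ⟨lam, hlam⟩ := IsAlgClosed.exists_pow_nat_eq (k := ℂ) μ hk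
      have hlamne : lam ≠ 0 := by
        intro h0
        rw [h0, zero_pow hk.ne'] at hlam
        have : ‖(0 : ℂ)‖ = 1 := by rw [hlam, hμ1]
        simp at this
      set ω : Fin n → ℂ := fun j => z j * lam⁻¹ with hωdef
      have hμne : μ ≠ 0 := by
        intro h0
        rw [h0] at hμ1
        simp at hμ1
      have hωk : ∀ j, ω j ^ k = 1 := by
        intro j
        rw [hωdef]
        simp only
        rw [mul_pow, hw j, inv_pow, hlam, mul_inv_cancel₀ hμne]
      -- geometric sum evaluation
      have hgeom : ∀ j, (∑ d ∈ Finset.range k, ω j ^ d)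
          = if ω j = 1 then (k : ℂ) else 0 := by
        intro j
        by_cases h1 : ω j = 1
        · rw [if_pos h1, h1]
          simp
        · rw [if_neg h1, geom_sum_eq h1, hωk j]
          simp
      -- total sum equals n
      have htot : (∑ j, ∑ d ∈ Finset.range k, ω j ^ d) = (n : ℂ) := by
        rw [Finset.sum_comm]
        have hrange : Finset.range k = insert 0 (Finset.Ioo 0 k) := by
          ext d; simp only [Finset.mem_range, Finset.mem_insert, Finset.mem_Ioo]; omega
        rw [hrange, Finset.sum_insert (by simp)]
        have h0 : (∑ j : Fin n, ω j ^ 0) = (n : ℂ) := by simp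
        have hrest : ∀ d ∈ Finset.Ioo 0 k, (∑ j : Fin n, ω j ^ d) = 0 := by
          intro d hd
          have : (∑ j : Fin n, ω j ^ d) = (lam⁻¹) ^ d * psumC n d z := by
            unfold psumC
            rw [Finset.mul_sum]
            apply Finset.sum_congr rfl
            intro j _
            rw [hωdef]
            simp only
            rw [mul_pow]
            ring
          rw [this, hzero d hd, mul_zero]
        rw [Finset.sum_eq_zero hrest, add_zero, h0]
      -- but also equals k * #{j | ω j = 1}
      have hcount : (∑ j, ∑ d ∈ Finset.range k, ω j ^ d)
          = (k : ℂ) * ((Finset.univ.filter (fun j => ω j = 1)).card : ℂ) := by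
        rw [Finset.sum_congr rfl (fun j _ => hgeom j)]
        rw [Finset.sum_ite, Finset.sum_const_zero, add_zero, Finset.sum_const,
          nsmul_eq_mul, mul_comm]
      rw [htot] at hcount
      have hnat : n = k * (Finset.univ.filter (fun j => ω j = 1)).card := by
        exact_mod_cast hcount
      exact hndvd ⟨_, hnat⟩
  rw [hpsi]
  positivity


theorem norm_sub_sq_expand (a b : ℂ) (e : ℝ) :
    ‖a - (e : ℂ) * b‖ ^ 2 = ‖a‖ ^ 2 - 2 * e * (a * (starRingEnd ℂ) b).re + e ^ 2 * ‖b‖ ^ 2 := by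
  have h : ∀ w : ℂ, ‖w‖ ^ 2 = Complex.normSq w := fun w => by
    rw [Complex.sq_norm]
  rw [h, h, h]
  simp only [Complex.normSq_apply, Complex.sub_re, Complex.sub_im, Complex.mul_re,
    Complex.mul_im, Complex.conj_re, Complex.conj_im, Complex.ofReal_re, Complex.ofReal_im]
  ring

/-- The main quantitative bound via compactness. -/
theorem main_bound (n k : ℕ) (hk : 0 < k) (hkn : k ≤ n) (hndvd : ¬ k ∣ n) :
    ∃ ε : ℝ, 0 < ε ∧ ∃ B : ℝ, 0 ≤ B ∧ B < n ∧
      ∀ z : Fin n → ℂ, (∀ j, ‖z j‖ ≤ 1) →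
        ‖psumC n k z - (ε : ℂ) * QzF n k z‖ ≤ B := by
  have hn : 0 < n := lt_of_lt_of_le hk hkn
  have hnR : (0 : ℝ) < n := by exact_mod_cast hn
  -- the closed polydisc is the closed unit ball
  set T : Set (Fin n → ℂ) := Metric.closedBall 0 1 with hTdef
  have hTmem : ∀ z : Fin n → ℂ, z ∈ T ↔ ∀ j, ‖z j‖ ≤ 1 := by
    intro z
    rw [hTdef, Metric.mem_closedBall, dist_zero_right, pi_norm_le_iff_of_nonneg zero_le_one]
  have hTcomp : IsCompact T := isCompact_closedBall 0 1
  -- the set where ψ ≤ 0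
  set A : Set (Fin n → ℂ) := T ∩ (psi n k) ⁻¹' (Set.Iic 0) with hAdef
  have hAcomp : IsCompact A :=
    hTcomp.inter_right ((isClosed_Iic).preimage (psi_cont n k))
  have hA0 : (0 : Fin n → ℂ) ∈ A := by
    constructor
    · rw [hTmem]; intro j; simp
    · simp only [Set.mem_preimage, Set.mem_Iic]
      unfold psi psumC
      simp [zero_pow hk.ne']
  obtain ⟨z₁, hz₁A, hz₁max⟩ := hAcomp.exists_isMaxOn ⟨0, hA0⟩
    (((psumC_cont n k).norm).continuousOn)
  set n₁ : ℝ := ‖psumC n k z₁‖ with hn₁def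
  have hn₁lt : n₁ < n := by
    rcases lt_or_eq_of_le (psumC_bound n k z₁ ((hTmem z₁).mp hz₁A.1)) with h | h
    · exact h
    · exfalso
      have hpos := psi_pos_of_max n k hk hkn hndvd z₁ ((hTmem z₁).mp hz₁A.1) h
      have := hz₁A.2
      simp only [Set.mem_preimage, Set.mem_Iic] at this
      linarith
  have hn₁0 : 0 ≤ n₁ := norm_nonneg _
  set η : ℝ := (n - n₁) / 2 with hηdef
  have hη : 0 < η := by rw [hηdef]; linarith
  -- the set where |p_k| is within η of n
  set Bη : Set (Fin n → ℂ) := T ∩ (fun z => ‖psumC n k z‖) ⁻¹' (Set.Ici (n - η)) with hBηdef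
  have hBηcomp : IsCompact Bη :=
    hTcomp.inter_right ((isClosed_Ici).preimage ((psumC_cont n k).norm))
  have hBηne : Bη.Nonempty := by
    refine ⟨fun _ => 1, ?_, ?_⟩
    · rw [hTmem]; intro j; simp
    · simp only [Set.mem_preimage, Set.mem_Ici]
      unfold psumC
      simp only [one_pow, Finset.sum_const, Finset.card_univ, Fintype.card_fin,
        nsmul_eq_mul, mul_one]
      rw [Complex.norm_natCast]
      linarith
  obtain ⟨z₂, hz₂B, hz₂min⟩ := hBηcomp.exists_isMinOn hBηne ((psi_cont n k).continuousOn)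
  set c₂ : ℝ := psi n k z₂ with hc₂def
  have hc₂pos : 0 < c₂ := by
    by_contra hle
    push_neg at hle
    have hz₂A : z₂ ∈ A := ⟨hz₂B.1, by simpa [Set.mem_preimage, Set.mem_Iic] using hle⟩
    have h1 : ‖psumC n k z₂‖ ≤ n₁ := hz₁max hz₂A
    have h2 := hz₂B.2
    simp only [Set.mem_preimage, Set.mem_Ici] at h2
    rw [hηdef] at h2
    linarith
  set C₀ : ℝ := k * n ^ 2 + 1 with hC₀def
  have hC₀pos : 0 < C₀ := by
    rw [hC₀def]
    have : (0:ℝ) ≤ k * n^2 := by positivity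
    linarith
  have hQb : ∀ z : Fin n → ℂ, (∀ j, ‖z j‖ ≤ 1) → ‖QzF n k z‖ ≤ C₀ := by
    intro z hz
    rw [hC₀def]
    linarith [QzF_bound n k z hz]
  set ε : ℝ := min (c₂ / C₀ ^ 2) (η / (2 * C₀)) with hεdef
  have hεpos : 0 < ε := by
    rw [hεdef]
    apply lt_min <;> positivity
  have hε1 : ε * C₀ ^ 2 ≤ c₂ := by
    have : ε ≤ c₂ / C₀ ^ 2 := min_le_left _ _
    calc ε * C₀ ^ 2 ≤ (c₂ / C₀ ^ 2) * C₀ ^ 2 := by nlinarith [sq_nonneg C₀]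
      _ = c₂ := by field_simp
  have hε2 : ε * C₀ ≤ η / 2 := by
    have : ε ≤ η / (2 * C₀) := min_le_right _ _
    calc ε * C₀ ≤ (η / (2 * C₀)) * C₀ := by nlinarith
      _ = η / 2 := by field_simp
  refine ⟨ε, hεpos, max (n - η / 2) (Real.sqrt (n ^ 2 - ε * c₂)), ?_, ?_, ?_⟩
  · exact le_trans (Real.sqrt_nonneg _) (le_max_right _ _)
  · apply max_lt
    · linarith
    · have hlt : (n:ℝ) ^ 2 - ε * c₂ < (n:ℝ) ^ 2 := by nlinarith
      exact (Real.sqrt_lt' hnR).mpr hlt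
  · intro z hz
    by_cases hcase : ‖psumC n k z‖ ≤ n - η
    · apply le_trans _ (le_max_left _ _)
      calc ‖psumC n k z - (ε:ℂ) * QzF n k z‖
          ≤ ‖psumC n k z‖ + ‖(ε:ℂ) * QzF n k z‖ := norm_sub_le _ _
        _ ≤ (n - η) + ε * C₀ := by
            apply add_le_add hcase
            rw [norm_mul, Complex.norm_real, Real.norm_eq_abs, abs_of_pos hεpos]
            exact mul_le_mul_of_nonneg_left (hQb z hz) hεpos.le
        _ ≤ n - η / 2 := by linarith
    · apply le_trans _ (le_max_right _ _)
      push_neg at hcase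
      have hzBη : z ∈ Bη := ⟨(hTmem z).mpr hz, by
        simp only [Set.mem_preimage, Set.mem_Ici]; linarith⟩
      have hψz : c₂ ≤ psi n k z := hz₂min hzBη
      have hsq : ‖psumC n k z - (ε:ℂ) * QzF n k z‖ ^ 2 ≤ n ^ 2 - ε * c₂ := by
        rw [norm_sub_sq_expand]
        have h1 : ‖psumC n k z‖ ^ 2 ≤ (n:ℝ) ^ 2 := by
          have := psumC_bound n k z hz
          nlinarith [norm_nonneg (psumC n k z)]
        have h2 : (psumC n k z * (starRingEnd ℂ) (QzF n k z)).re = psi n k z := rfl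
        have h3 : ε ^ 2 * ‖QzF n k z‖ ^ 2 ≤ ε * c₂ := by
          have hq := hQb z hz
          have : ‖QzF n k z‖ ^ 2 ≤ C₀ ^ 2 := by nlinarith [norm_nonneg (QzF n k z)]
          calc ε ^ 2 * ‖QzF n k z‖ ^ 2 ≤ ε ^ 2 * C₀ ^ 2 := by nlinarith [sq_nonneg ε]
            _ = ε * (ε * C₀ ^ 2) := by ring
            _ ≤ ε * c₂ := by nlinarith
        rw [h2]
        nlinarith
      have hnn : (0:ℝ) ≤ n ^ 2 - ε * c₂ := le_trans (sq_nonneg _) hsq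
      calc ‖psumC n k z - (ε:ℂ) * QzF n k z‖
          = Real.sqrt (‖psumC n k z - (ε:ℂ) * QzF n k z‖ ^ 2) := by
            rw [Real.sqrt_sq (norm_nonneg _)]
        _ ≤ Real.sqrt (n ^ 2 - ε * c₂) := Real.sqrt_le_sqrt hsq



theorem esym_eq_esymm (n m : ℕ) (z : Fin n → ℂ) :
    esym n m z = ((Finset.univ : Finset (Fin n)).val.map z).esymm m := by
  rw [Finset.esymm_map_val, esym]

theorem ball_subset_symPolydisc (n : ℕ) (hn : 0 < n) :
    Metric.ball (0 : Fin n → ℂ) (1 / (n + 1)) ⊆ symPolydisc n := by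
  intro s hs
  have hρ : (0:ℝ) < 1 / (n + 1) := by positivity
  have hsj : ∀ j : Fin n, ‖s j‖ < 1 / (n + 1) := by
    intro j
    calc ‖s j‖ ≤ ‖s‖ := norm_le_pi_norm s j
      _ < 1 / (n + 1) := by rwa [mem_ball_zero_iff] at hs
  -- the candidate polynomial
  set q : Polynomial ℂ :=
    ∑ j : Fin n, C ((-1 : ℂ) ^ ((j : ℕ) + 1) * s j) * X ^ (n - 1 - (j : ℕ)) with hqdef
  set P : Polynomial ℂ := X ^ n + q with hPdef
  have hqdeg : q.degree < (n : ℕ) := by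
    rw [hqdef]
    apply lt_of_le_of_lt (Polynomial.degree_sum_le _ _)
    rw [Finset.sup_lt_iff (by exact_mod_cast WithBot.bot_lt_coe (n:ℕ))]
    intro j _
    apply lt_of_le_of_lt (Polynomial.degree_C_mul_X_pow_le _ _)
    exact_mod_cast (by omega : n - 1 - (j : ℕ) < n)
  have hmonic : P.Monic := Polynomial.monic_X_pow_add hqdeg
  have hPdeg : P.degree = (n : ℕ) := by
    rw [hPdef, Polynomial.degree_add_eq_left_of_degree_lt (by rwa [Polynomial.degree_X_pow]),
      Polynomial.degree_X_pow]
  have hPnatdeg : P.natDegree = n := Polynomial.natDegree_eq_of_degree_eq_some hPdeg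
  have hsplits : P.Splits := IsAlgClosed.splits P
  have hcard : Multiset.card P.roots = n := by
    rw [Polynomial.splits_iff_card_roots.mp hsplits, hPnatdeg]
  -- all roots are small
  have hroot : ∀ w ∈ P.roots, ‖w‖ < 1 := by
    intro w hw
    by_contra hge
    push_neg at hge
    have hwpos : (0:ℝ) < ‖w‖ := lt_of_lt_of_le one_pos hge
    have heval : P.eval w = 0 := (Polynomial.mem_roots (hmonic.ne_zero)).mp hw
    have hwn : w ^ n = -∑ j : Fin n, ((-1 : ℂ) ^ ((j : ℕ) + 1) * s j) * w ^ (n - 1 - (j : ℕ)) := by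
      have : P.eval w = w ^ n + ∑ j : Fin n, ((-1 : ℂ) ^ ((j : ℕ) + 1) * s j) * w ^ (n - 1 - (j : ℕ)) := by
        rw [hPdef, hqdef]
        simp [Polynomial.eval_finset_sum]
      rw [this] at heval
      linear_combination heval
    have hnorm : ‖w‖ ^ n < (n : ℝ) * ((1 / (n + 1)) * ‖w‖ ^ (n - 1)) := by
      calc ‖w‖ ^ n = ‖w ^ n‖ := (norm_pow w n).symm
        _ ≤ ∑ j : Fin n, ‖((-1 : ℂ) ^ ((j : ℕ) + 1) * s j) * w ^ (n - 1 - (j : ℕ))‖ := by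
            rw [hwn, norm_neg]
            exact norm_sum_le _ _
        _ < ∑ _j : Fin n, (1 / (n + 1)) * ‖w‖ ^ (n - 1) := by
            apply Finset.sum_lt_sum_of_nonempty (Finset.univ_nonempty_iff.mpr ⟨⟨0, hn⟩⟩)
            intro j _
            rw [norm_mul, norm_mul, norm_pow, norm_pow, norm_neg, norm_one, one_pow, one_mul]
            have h1 : ‖w‖ ^ (n - 1 - (j : ℕ)) ≤ ‖w‖ ^ (n - 1) :=
              pow_le_pow_right₀ hge (by omega)
            have h2 : (0:ℝ) < ‖w‖ ^ (n - 1 - (j:ℕ)) := by positivity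
            calc ‖s j‖ * ‖w‖ ^ (n - 1 - (j : ℕ))
                < (1 / (n + 1)) * ‖w‖ ^ (n - 1 - (j : ℕ)) := by
                  exact mul_lt_mul_of_pos_right (hsj j) h2
              _ ≤ (1 / (n + 1)) * ‖w‖ ^ (n - 1) := by
                  exact mul_le_mul_of_nonneg_left h1 (le_of_lt hρ)
        _ = (n : ℝ) * ((1 / (n + 1)) * ‖w‖ ^ (n - 1)) := by
            rw [Finset.sum_const, Finset.card_univ, Fintype.card_fin, nsmul_eq_mul]
    have hmono : ‖w‖ ^ (n - 1) ≤ ‖w‖ ^ n := pow_le_pow_right₀ hge (by omega)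
    have hfinal : ‖w‖ ^ n < ‖w‖ ^ n := by
      have hnn1 : (n : ℝ) * (1 / (n + 1)) < 1 := by
        rw [mul_one_div, div_lt_one (by positivity)]
        linarith
      calc ‖w‖ ^ n < (n : ℝ) * ((1 / (n + 1)) * ‖w‖ ^ (n - 1)) := hnorm
        _ = ((n : ℝ) * (1 / (n + 1))) * ‖w‖ ^ (n - 1) := by ring
        _ ≤ ((n : ℝ) * (1 / (n + 1))) * ‖w‖ ^ n := by
            apply mul_le_mul_of_nonneg_left hmono
            positivity
        _ < 1 * ‖w‖ ^ n := by
            apply mul_lt_mul_of_pos_right hnn1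
            positivity
        _ = ‖w‖ ^ n := one_mul _
    exact absurd hfinal (lt_irrefl _)
  -- Vieta
  have hfact : P = (P.roots.map fun a => X - C a).prod :=
    hsplits.eq_prod_roots_of_monic hmonic
  have hesymm : ∀ m : ℕ, ∀ hm1 : 1 ≤ m, ∀ hmn : m ≤ n,
      P.roots.esymm m = s ⟨m - 1, Nat.lt_of_lt_of_le (Nat.sub_lt hm1 Nat.one_pos) hmn⟩ := by
    intro m hm1 hmn
    have hcoeff1 : P.coeff (n - m) = (-1 : ℂ) ^ m *
        s ⟨m - 1, Nat.lt_of_lt_of_le (Nat.sub_lt hm1 Nat.one_pos) hmn⟩ := by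
      rw [hPdef, hqdef, Polynomial.coeff_add, Polynomial.coeff_X_pow,
        if_neg (by omega : ¬ (n - m = n)), Polynomial.finset_sum_coeff]
      rw [zero_add]
      rw [Finset.sum_eq_single (⟨m - 1, by omega⟩ : Fin n)]
      · rw [Polynomial.coeff_C_mul, Polynomial.coeff_X_pow,
          if_pos (by simp only [Fin.val_mk]; omega :
            n - m = n - 1 - ((⟨m - 1, Nat.lt_of_lt_of_le (Nat.sub_lt hm1 Nat.one_pos) hmn⟩ :
              Fin n) : ℕ)), mul_one]
        have hexp : ((⟨m - 1, Nat.lt_of_lt_of_le (Nat.sub_lt hm1 Nat.one_pos) hmn⟩ :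
            Fin n) : ℕ) + 1 = m := by simp only [Fin.val_mk]; omega
        rw [hexp]
      · intro j _ hj
        rw [Polynomial.coeff_C_mul, Polynomial.coeff_X_pow, if_neg, mul_zero]
        intro habs
        apply hj
        have hjval : (j : ℕ) = m - 1 := by omega
        exact Fin.ext hjval
      · intro habs
        exact absurd (Finset.mem_univ _) habs
    have hcoeff2 : P.coeff (n - m) = (-1 : ℂ) ^ m * P.roots.esymm m := by
      have hcg := congrArg (fun p : Polynomial ℂ => p.coeff (n - m)) hfact
      rw [hcg]
      have hle : n - m ≤ Multiset.card P.roots := by rw [hcard]; omega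
      have := Multiset.prod_X_sub_C_coeff P.roots hle
      rw [this, hcard]
      congr 2 <;> omega
    have heq := hcoeff1.symm.trans hcoeff2
    have hne : ((-1 : ℂ) ^ m) ≠ 0 := by
      apply pow_ne_zero; norm_num
    exact (mul_left_cancel₀ hne heq).symm
  -- enumerate the roots
  set l : List ℂ := P.roots.toList with hldef
  have hlen : l.length = n := by rw [hldef, Multiset.length_toList, hcard]
  set z : Fin n → ℂ := fun i => l.getD (i : ℕ) 0 with hzdef
  have hofn : List.ofFn z = l := by
    apply List.ext_getElem
    · rw [List.length_ofFn, hlen]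
    · intro i h1 h2
      rw [List.getElem_ofFn]
      show l.getD i 0 = l[i]
      rw [List.getD_eq_getElem l 0 h2]
  have hmul : (Finset.univ : Finset (Fin n)).val.map z = P.roots := by
    rw [Fin.univ_val_map, hofn, hldef, Multiset.coe_toList]
  have hzmem : ∀ i : Fin n, ‖z i‖ < 1 := by
    intro i
    apply hroot
    have : z i ∈ l := by
      rw [← hofn]
      exact List.mem_ofFn.mpr ⟨i, rfl⟩
    rw [hldef] at this
    exact (Multiset.mem_toList).mp this
  refine ⟨z, hzmem, ?_⟩
  funext j
  show esym n ((j : ℕ) + 1) z = s j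
  rw [esym_eq_esymm, hmul, hesymm ((j : ℕ) + 1) (by omega) (by exact j.isLt)]
  congr 1


end CaraSymAux

/-- if `1 ≤ k ≤ n` and `k` does not divide `n`, then the Carathéodory
metric of `𝔾ₙ` at the origin in the direction of the `k`-th standard basis vector
satisfies the strict inequality `γ_{𝔾ₙ}(0; e_k) > k/n`. -/
theorem caratheodory_symPolydisc_strict (n k : ℕ) (hk : 0 < k) (hkn : k ≤ n)
    (hndvd : ¬ k ∣ n) :
    caratheodory (symPolydisc n) 0
      (fun j : Fin n => if (j : ℕ) = k - 1 then 1 else 0) > (k : ℝ) / n := by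
  classical
  have hn : 0 < n := lt_of_lt_of_le hk hkn
  have hnR : (0:ℝ) < n := by exact_mod_cast hn
  set X : Fin n → ℂ := fun j : Fin n => if (j : ℕ) = k - 1 then 1 else 0 with hXdef
  set D : Set (Fin n → ℂ) := symPolydisc n with hDdef
  set S : Set ℝ := {r : ℝ | ∃ f : (Fin n → ℂ) → ℂ, DifferentiableOn ℂ f D ∧
    (∀ w ∈ D, ‖f w‖ < 1) ∧ f 0 = 0 ∧ r = ‖fderiv ℂ f 0 X‖} with hSdef
  have hXnorm : ‖X‖ ≤ 1 := by
    rw [pi_norm_le_iff_of_nonneg zero_le_one]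
    intro j
    rw [hXdef]
    by_cases h : (j : ℕ) = k - 1 <;> simp [h]
  set ρ : ℝ := 1 / (n + 1) with hρdef
  have hρpos : 0 < ρ := by rw [hρdef]; positivity
  have hball : Metric.ball (0 : Fin n → ℂ) ρ ⊆ D := CaraSymAux.ball_subset_symPolydisc n hn
  -- S is bounded above, via the Schwarz lemma
  have hbdd : BddAbove S := by
    refine ⟨(n : ℝ) + 1, ?_⟩
    rintro r ⟨f, hdf, hfb, hf0, rfl⟩
    set g : ℂ → ℂ := fun t => f (t • X) with hgdef
    have hsmul : ∀ t : ℂ, t ∈ Metric.ball (0:ℂ) ρ → t • X ∈ Metric.ball (0 : Fin n → ℂ) ρ := by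
      intro t ht
      rw [mem_ball_zero_iff] at ht ⊢
      calc ‖t • X‖ = ‖t‖ * ‖X‖ := norm_smul t X
        _ ≤ ‖t‖ * 1 := mul_le_mul_of_nonneg_left hXnorm (norm_nonneg t)
        _ < ρ := by rwa [mul_one]
    have hinnerdiff : Differentiable ℂ (fun t : ℂ => t • X) := by
      apply Differentiable.smul_const differentiable_id
    have hgd : DifferentiableOn ℂ g (Metric.ball (0:ℂ) ρ) := by
      apply DifferentiableOn.comp hdf hinnerdiff.differentiableOn
      intro t ht
      exact hball (hsmul t ht)
    have hg0 : g 0 = 0 := by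
      rw [hgdef]; simp only [zero_smul]; exact hf0
    have hgm : Set.MapsTo g (Metric.ball (0:ℂ) ρ) (Metric.ball (g 0) 1) := by
      intro t ht
      rw [hg0, mem_ball_zero_iff]
      exact hfb _ (hball (hsmul t ht))
    have hderiv_le : ‖deriv g 0‖ ≤ 1 / ρ :=
      Complex.norm_deriv_le_div_of_mapsTo_ball hgd (hgm.mono_right Metric.ball_subset_closedBall) hρpos
    have hfd : DifferentiableAt ℂ f 0 := by
      apply (hdf.mono hball).differentiableAt
      exact Metric.isOpen_ball.mem_nhds (Metric.mem_ball_self hρpos)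
    have hinner : HasDerivAt (fun t : ℂ => t • X) X 0 := by
      have := (hasDerivAt_id (0:ℂ)).smul_const X
      simpa using this
    have hcomp : HasDerivAt g (fderiv ℂ f 0 X) 0 := by
      have hfd0 : HasFDerivAt f (fderiv ℂ f 0) ((0:ℂ) • X) := by
        rw [zero_smul]; exact hfd.hasFDerivAt
      have := hfd0.comp_hasDerivAt 0 hinner
      simpa [hgdef, Function.comp_def] using this
    have : ‖fderiv ℂ f 0 X‖ ≤ 1 / ρ := by rw [← hcomp.deriv]; exact hderiv_le
    calc ‖fderiv ℂ f 0 X‖ ≤ 1 / ρ := this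
      _ = n + 1 := by rw [hρdef]; field_simp
  -- the competitor
  obtain ⟨ε, hεpos, B, hB0, hBn, hbound⟩ := CaraSymAux.main_bound n k hk hkn hndvd
  set B' : ℝ := (B + n) / 2 with hB'def
  have hB'pos : 0 < B' := by rw [hB'def]; linarith
  have hBB' : B < B' := by rw [hB'def]; linarith
  have hB'n : B' < n := by rw [hB'def]; linarith
  set f : (Fin n → ℂ) → ℂ := fun s => ((B' : ℂ))⁻¹ *
      (CaraSymAux.NP n k s - (ε : ℂ) * ∑ d ∈ Finset.Ioo 0 k,
        CaraSymAux.NP n d s * CaraSymAux.NP n (k - d) s) with hfdef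
  have hfdiff : Differentiable ℂ f := by
    apply Differentiable.const_mul
    apply Differentiable.sub (CaraSymAux.NP_diff n k)
    apply Differentiable.const_mul
    apply Differentiable.fun_sum
    intro d _
    exact (CaraSymAux.NP_diff n d).mul (CaraSymAux.NP_diff n (k - d))
  have hfbound : ∀ w ∈ D, ‖f w‖ < 1 := by
    rintro w ⟨z, hz, rfl⟩
    have hzT : ∀ j, ‖z j‖ ≤ 1 := fun j => (hz j).le
    have hNPk : CaraSymAux.NP n k (symMap n z) = CaraSymAux.psumC n k z :=
      CaraSymAux.NP_symMap n z k hk hkn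
    have hsum : (∑ d ∈ Finset.Ioo 0 k, CaraSymAux.NP n d (symMap n z) *
        CaraSymAux.NP n (k - d) (symMap n z)) = CaraSymAux.QzF n k z := by
      unfold CaraSymAux.QzF
      apply Finset.sum_congr rfl
      intro d hd
      rw [Finset.mem_Ioo] at hd
      rw [CaraSymAux.NP_symMap n z d hd.1 (by omega),
        CaraSymAux.NP_symMap n z (k - d) (by omega) (by omega)]
    rw [hfdef]
    simp only
    rw [hNPk, hsum, norm_mul]
    have h1 : ‖((B' : ℝ) : ℂ)⁻¹‖ = B'⁻¹ := by
      rw [norm_inv, Complex.norm_real, Real.norm_eq_abs, abs_of_pos hB'pos]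
    rw [h1]
    have h2 := hbound z hzT
    calc B'⁻¹ * ‖CaraSymAux.psumC n k z - (ε:ℂ) * CaraSymAux.QzF n k z‖
        ≤ B'⁻¹ * B := by
          apply mul_le_mul_of_nonneg_left h2 (by positivity)
      _ < 1 := by
          rw [← div_eq_inv_mul, div_lt_one hB'pos]
          exact hBB'
  have hf0 : f 0 = 0 := by
    rw [hfdef]
    simp only
    rw [CaraSymAux.NP_zero n k hk]
    have : (∑ d ∈ Finset.Ioo 0 k, CaraSymAux.NP n d (0 : Fin n → ℂ) *
        CaraSymAux.NP n (k - d) 0) = 0 := by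
      apply Finset.sum_eq_zero
      intro d hd
      rw [Finset.mem_Ioo] at hd
      rw [CaraSymAux.NP_zero n d hd.1, zero_mul]
    rw [this]
    ring
  -- derivative of f at 0
  have hsumderiv : HasFDerivAt (fun s : Fin n → ℂ => ∑ d ∈ Finset.Ioo 0 k,
      CaraSymAux.NP n d s * CaraSymAux.NP n (k - d) s) (0 : (Fin n → ℂ) →L[ℂ] ℂ) 0 := by
    have hz : (0 : (Fin n → ℂ) →L[ℂ] ℂ) = ∑ _d ∈ Finset.Ioo 0 k, (0 : (Fin n → ℂ) →L[ℂ] ℂ) := by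
      simp
    rw [hz]
    apply HasFDerivAt.fun_sum
    intro d hd
    rw [Finset.mem_Ioo] at hd
    have hu : HasFDerivAt (CaraSymAux.NP n d) (fderiv ℂ (CaraSymAux.NP n d) 0) 0 :=
      (CaraSymAux.NP_diff n d 0).hasFDerivAt
    have hv : HasFDerivAt (CaraSymAux.NP n (k - d)) (fderiv ℂ (CaraSymAux.NP n (k - d)) 0) 0 :=
      (CaraSymAux.NP_diff n (k - d) 0).hasFDerivAt
    have hprod := hu.fun_mul hv
    simp only [CaraSymAux.NP_zero n d hd.1, CaraSymAux.NP_zero n (k - d) (by omega : 0 < k - d),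
      zero_smul, smul_zero, zero_add, add_zero] at hprod
    refine hprod.congr_fderiv ?_; ext; simp
  have hNPkderiv := CaraSymAux.NP_hasFDerivAt n k hk hkn
  have hfderiv : HasFDerivAt f (((B' : ℂ))⁻¹ • (((-1 : ℂ) ^ (k + 1) * k) •
      CaraSymAux.projCLM n ⟨k - 1, by omega⟩)) 0 := by
    have hmul2 : HasFDerivAt (fun s : Fin n → ℂ => (ε : ℂ) * ∑ d ∈ Finset.Ioo 0 k,
        CaraSymAux.NP n d s * CaraSymAux.NP n (k - d) s) (0 : (Fin n → ℂ) →L[ℂ] ℂ) 0 := by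
      have := hsumderiv.const_mul (ε : ℂ)
      refine this.congr_fderiv ?_; ext; simp
    have hsub := hNPkderiv.fun_sub hmul2
    rw [sub_zero] at hsub
    have := hsub.const_mul ((B' : ℂ))⁻¹
    convert this using 2
  have hfderivval : ‖fderiv ℂ f 0 X‖ = k / B' := by
    rw [hfderiv.fderiv]
    rw [ContinuousLinearMap.smul_apply, ContinuousLinearMap.smul_apply]
    have hproj : CaraSymAux.projCLM n ⟨k - 1, by omega⟩ X = 1 := by
      show X ⟨k - 1, by omega⟩ = 1
      rw [hXdef]
      simp
    rw [hproj]
    simp only [smul_eq_mul, mul_one]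
    rw [norm_mul, norm_mul, norm_pow, norm_neg, norm_one, one_pow, one_mul,
      norm_inv, Complex.norm_real, Real.norm_eq_abs, abs_of_pos hB'pos, Complex.norm_natCast]
    rw [div_eq_inv_mul]
  have hmem : (k : ℝ) / B' ∈ S := by
    rw [hSdef]
    exact ⟨f, hfdiff.differentiableOn, hfbound, hf0, hfderivval.symm⟩
  have hlt : (k : ℝ) / n < (k : ℝ) / B' := by
    apply div_lt_div_of_pos_left _ hB'pos hB'n
    exact_mod_cast hk
  have : (k : ℝ) / B' ≤ sSup S := le_csSup hbdd hmem
  calc (k : ℝ) / n < (k : ℝ) / B' := hlt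
    _ ≤ sSup S := this
end
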